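/- No finite quotient of the infinite dihedral group D_∞ is a Beauville group. In particular, if F is the free product of two cyclic groups of order 2, then F/λ_n(F) is not a Beauville group for any n. -/

import Mathlib

/-- The subgroup generated by `m`-th powers of elements of `H`. -/
def pPow {G : Type*} [Group G] (H : Subgroup G) (m : ℕ) : Subgroup G :=
  Subgroup.closure {x : G | ∃ h ∈ H, x = h ^ m}

/-- The `p`-central series: `lam p 1 = ⊤` and `lam p (n+1) = [lam p n, G] ⊔ (lam p n)^p`.
    (We also set `lam p 0 = ⊤`.) -/
def lam {G : Type*} [Group G] (p : ℕ) : ℕ → Subgroup G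
  | 0 => ⊤
  | 1 => ⊤
  | (n+2) => ⁅(lam p (n+1) : Subgroup G), (⊤ : Subgroup G)⁆ ⊔ pPow (lam p (n+1)) p

theorem pPow_normal {G : Type*} [Group G] (H : Subgroup G) [hH : H.Normal] (m : ℕ) :
    (pPow H m).Normal := by
  have key : ∀ x ∈ pPow H m, ∀ g : G, g * x * g⁻¹ ∈ pPow H m := by
    intro x hx
    induction hx using Subgroup.closure_induction with
    | mem y hy =>
        intro g
        obtain ⟨h, hh, rfl⟩ := hy
        refine Subgroup.subset_closure ⟨g * h * g⁻¹, hH.conj_mem h hh g, ?_⟩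
        exact conj_pow.symm
    | one => intro g; simpa using (pPow H m).one_mem
    | mul x y hx hy ihx ihy =>
        intro g
        have h2 := mul_mem (ihx g) (ihy g)
        have : g * x * g⁻¹ * (g * y * g⁻¹) = g * (x * y) * g⁻¹ := by group
        rwa [this] at h2
    | inv x hx ihx =>
        intro g
        have h2 := inv_mem (ihx g)
        have : (g * x * g⁻¹)⁻¹ = g * x⁻¹ * g⁻¹ := by group
        rwa [this] at h2
  exact ⟨fun x hx g => key x hx g⟩

theorem lam_normal' {G : Type*} [Group G] (p : ℕ) : ∀ n, (lam (G := G) p n).Normal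
  | 0 => inferInstanceAs (⊤ : Subgroup G).Normal
  | 1 => inferInstanceAs (⊤ : Subgroup G).Normal
  | (n+2) => by
      haveI := lam_normal' (G := G) p (n+1)
      haveI := pPow_normal (lam (G := G) p (n+1)) p
      show (⁅(lam p (n+1) : Subgroup G), (⊤ : Subgroup G)⁆ ⊔ pPow (lam p (n+1)) p).Normal
      infer_instance

instance lam_normal {G : Type*} [Group G] (p n : ℕ) : (lam (G := G) p n).Normal :=
  lam_normal' p n

/-- The union of all conjugates of the cyclic subgroup generated by `x`. -/
def conjClosure {G : Type*} [Group G] (x : G) : Set G :=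
  ⋃ g : G, (fun h => g⁻¹ * h * g) '' (Subgroup.zpowers x : Set G)

/-- `Σ(x,y)`: the union of all conjugates of `⟨x⟩`, `⟨y⟩` and `⟨xy⟩`. -/
def SigmaSet {G : Type*} [Group G] (x y : G) : Set G :=
  conjClosure x ∪ conjClosure y ∪ conjClosure (x * y)

/-- `{x₁,y₁}` and `{x₂,y₂}` form a Beauville structure for `G`. -/
def IsBeauvilleStructure {G : Type*} [Group G] (x₁ y₁ x₂ y₂ : G) : Prop :=
  Subgroup.closure {x₁, y₁} = ⊤ ∧ Subgroup.closure {x₂, y₂} = ⊤ ∧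
    SigmaSet x₁ y₁ ∩ SigmaSet x₂ y₂ = {1}

/-- A Beauville group: a finite nontrivial (2-generated) group admitting a Beauville
structure. -/
def IsBeauvilleGroup (G : Type*) [Group G] : Prop :=
  Finite G ∧ Nontrivial G ∧ ∃ x₁ y₁ x₂ y₂ : G, IsBeauvilleStructure x₁ y₁ x₂ y₂

/-- Relators `x^p, y^p` for the free product `C_p * C_p` of two cyclic groups of order `p`. -/
def freeProdRels (p : ℕ) : Set (FreeGroup (Fin 2)) :=
  {FreeGroup.of 0 ^ p, FreeGroup.of 1 ^ p}


section Aux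

open Subgroup DihedralGroup

lemma mem_conjClosure {G : Type*} [Group G] {x z : G} :
    z ∈ conjClosure x ↔ ∃ g : G, ∃ k : ℤ, g⁻¹ * x ^ k * g = z := by
  simp only [conjClosure, Set.mem_iUnion, Set.mem_image, SetLike.mem_coe, mem_zpowers_iff]
  constructor
  · rintro ⟨g, h, ⟨k, rfl⟩, rfl⟩; exact ⟨g, k, rfl⟩
  · rintro ⟨g, k, rfl⟩; exact ⟨g, x ^ k, ⟨k, rfl⟩, rfl⟩

lemma zpowers_subset_conjClosure {G : Type*} [Group G] (x : G) :
    (Subgroup.zpowers x : Set G) ⊆ conjClosure x := by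
  intro z hz
  obtain ⟨k, hk⟩ := mem_zpowers_iff.mp hz
  exact mem_conjClosure.mpr ⟨1, k, by simpa using hk⟩

lemma zpowers_subset_sigma_left {G : Type*} [Group G] (x y : G) :
    (Subgroup.zpowers x : Set G) ⊆ SigmaSet x y := fun _ hz =>
  Or.inl (Or.inl (zpowers_subset_conjClosure x hz))

lemma zpowers_subset_sigma_right {G : Type*} [Group G] (x y : G) :
    (Subgroup.zpowers y : Set G) ⊆ SigmaSet x y := fun _ hz =>
  Or.inl (Or.inr (zpowers_subset_conjClosure y hz))

lemma zpowers_subset_sigma_mul {G : Type*} [Group G] (x y : G) :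
    (Subgroup.zpowers (x * y) : Set G) ⊆ SigmaSet x y := fun _ hz =>
  Or.inr (zpowers_subset_conjClosure (x * y) hz)

lemma conjClosure_image {G H : Type*} [Group G] [Group H] (e : G ≃* H) (x : G) :
    conjClosure (e x) = (e : G → H) '' conjClosure x := by
  ext z
  simp only [Set.mem_image]
  constructor
  · rintro hz
    obtain ⟨g, k, rfl⟩ := mem_conjClosure.mp hz
    obtain ⟨g', rfl⟩ := e.surjective g
    exact ⟨g'⁻¹ * x ^ k * g', mem_conjClosure.mpr ⟨g', k, rfl⟩, by simp [map_zpow]⟩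
  · rintro ⟨w, hw, rfl⟩
    obtain ⟨g, k, rfl⟩ := mem_conjClosure.mp hw
    exact mem_conjClosure.mpr ⟨e g, k, by simp [map_zpow]⟩

lemma sigma_image {G H : Type*} [Group G] [Group H] (e : G ≃* H) (x y : G) :
    SigmaSet (e x) (e y) = (e : G → H) '' SigmaSet x y := by
  unfold SigmaSet
  rw [← map_mul, conjClosure_image, conjClosure_image, conjClosure_image, Set.image_union,
    Set.image_union]

lemma closure_pair_image {G H : Type*} [Group G] [Group H] (e : G ≃* H) {x y : G}
    (h : Subgroup.closure {x, y} = ⊤) : Subgroup.closure {e x, e y} = ⊤ := by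
  have h2 := MonoidHom.map_closure (e : G →* H) {x, y}
  rw [h, Subgroup.map_top_of_surjective _ e.surjective] at h2
  rw [Set.image_insert_eq, Set.image_singleton] at h2
  exact h2.symm

lemma isBeauville_of_mulEquiv {G H : Type*} [Group G] [Group H] (e : G ≃* H) :
    IsBeauvilleGroup G → IsBeauvilleGroup H := by
  rintro ⟨hF, hN, x1, y1, x2, y2, h1, h2, hint⟩
  refine ⟨Finite.of_equiv G e.toEquiv, e.symm.toEquiv.nontrivial, e x1, e y1, e x2, e y2,
    closure_pair_image e h1, closure_pair_image e h2, ?_⟩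
  rw [sigma_image, sigma_image, ← Set.image_inter e.injective, hint, Set.image_singleton,
    map_one]

lemma inv_r0 (i : ZMod 0) : (r i : DihedralGroup 0)⁻¹ = r (-i) := by
  rw [eq_comm, eq_inv_iff_mul_eq_one, r_mul_r, neg_add_cancel, one_def]

lemma r1_zpow (k : ℤ) : (r 1 : DihedralGroup 0) ^ k = r (k : ZMod 0) := by
  induction k using Int.induction_on with
  | zero => rw [zpow_zero, one_def]; rfl
  | succ n ih => rw [zpow_add, zpow_one, ih]; exact r_mul_r _ _
  | pred n ih => rw [sub_eq_add_neg, zpow_add, ih, zpow_neg, zpow_one, inv_r0]; exact r_mul_r _ _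

lemma dih_cases (d : DihedralGroup 0) :
    (∃ i : ℤ, d = (r 1) ^ i) ∨
      (d * d = 1 ∧ ∀ k : ℤ, d * (r 1) ^ k * d = (r 1) ^ (-k)) := by
  cases d with
  | r i => exact Or.inl ⟨i, (r1_zpow i).symm⟩
  | sr i =>
      refine Or.inr ⟨sr_mul_self i, fun k => ?_⟩
      rw [r1_zpow, r1_zpow]
      exact ((congrArg (· * sr i) (sr_mul_r i k)).trans (sr_mul_sr _ _)).trans
        (congrArg r (show i - (i + (show ZMod 0 from k)) = -(show ZMod 0 from k) by ring))


lemma dihedral_gen {G : Type*} [Group G] {x y : G} (hx2 : x * x = 1)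
    (hconj : ∀ k : ℤ, x * y ^ k * x = y ^ (-k))
    (hgen : Subgroup.closure {x, y} = ⊤) (g : G) :
    g ∈ zpowers y ∨ x * g ∈ zpowers y := by
  have hxi : x⁻¹ = x := inv_eq_of_mul_eq_one_left hx2
  have key : ∀ k : ℤ, x * y ^ k = y ^ (-k) * x := by
    intro k
    calc x * y ^ k = (x * y ^ k * x) * x⁻¹ := by group
    _ = y ^ (-k) * x := by rw [hconj, hxi]
  have hg : g ∈ Subgroup.closure {x, y} := by rw [hgen]; exact mem_top g
  induction hg using Subgroup.closure_induction with
  | mem s hs =>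
      rcases hs with rfl | rfl
      · exact Or.inr (by rw [hx2]; exact one_mem _)
      · exact Or.inl (mem_zpowers _)
  | one => exact Or.inl (one_mem _)
  | mul g h hg hh ihg ihh =>
      simp only [mem_zpowers_iff] at ihg ihh
      rcases ihg with ⟨a, ha⟩ | ⟨a, ha⟩ <;> rcases ihh with ⟨b, hb⟩ | ⟨b, hb⟩
      · exact Or.inl (mem_zpowers_iff.mpr ⟨a + b, by rw [zpow_add, ha, hb]⟩)
      · refine Or.inr (mem_zpowers_iff.mpr ⟨-a + b, ?_⟩)
        calc y ^ (-a + b) = y ^ (-a) * y ^ b := zpow_add ..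
        _ = y ^ (-a) * (x * h) := by rw [hb]
        _ = (y ^ (-a) * x) * h := by group
        _ = (x * y ^ a) * h := by rw [key]
        _ = x * (g * h) := by rw [ha, mul_assoc]
      · refine Or.inr (mem_zpowers_iff.mpr ⟨a + b, ?_⟩)
        calc y ^ (a + b) = y ^ a * y ^ b := zpow_add ..
        _ = (x * g) * h := by rw [ha, hb]
        _ = x * (g * h) := mul_assoc ..
      · have hgx : g = x * y ^ a := by
          have h2 : x * (x * g) = x * y ^ a := by rw [ha]
          rw [← mul_assoc, hx2, one_mul] at h2; exact h2
        have hhx : h = x * y ^ b := by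
          have h2 : x * (x * h) = x * y ^ b := by rw [hb]
          rw [← mul_assoc, hx2, one_mul] at h2; exact h2
        refine Or.inl (mem_zpowers_iff.mpr ⟨-a + b, ?_⟩)
        rw [hgx, hhx]
        calc y ^ (-a + b) = y ^ (-a) * y ^ b := zpow_add ..
        _ = (x * y ^ a * x) * y ^ b := by rw [hconj]
        _ = (x * y ^ a) * (x * y ^ b) := by group
  | inv g hg ihg =>
      simp only [mem_zpowers_iff] at ihg
      rcases ihg with ⟨a, ha⟩ | ⟨a, ha⟩
      · exact Or.inl (mem_zpowers_iff.mpr ⟨-a, by rw [zpow_neg, ha]⟩)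
      · have hgx : g = x * y ^ a := by
          have h2 : x * (x * g) = x * y ^ a := by rw [ha]
          rw [← mul_assoc, hx2, one_mul] at h2; exact h2
        refine Or.inr (mem_zpowers_iff.mpr ⟨a, ?_⟩)
        rw [hgx]
        have h3 := hconj (-a)
        rw [neg_neg] at h3
        calc y ^ a = x * y ^ (-a) * x := h3.symm
        _ = x * ((y ^ a)⁻¹ * x⁻¹) := by rw [hxi]; group
        _ = x * (x * y ^ a)⁻¹ := by rw [mul_inv_rev]

lemma T_le_zpowers {G : Type*} [Group G] {u x y : G} (hx2 : x * x = 1)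
    (hxu : ∀ k : ℤ, x * u ^ k * x = u ^ (-k)) (hxT : x ∉ zpowers u)
    (hyT : y ∈ zpowers u) (hgen : Subgroup.closure {x, y} = ⊤) :
    zpowers u ≤ zpowers y := by
  obtain ⟨m, hm⟩ := mem_zpowers_iff.mp hyT
  have hconj : ∀ k : ℤ, x * y ^ k * x = y ^ (-k) := by
    intro k
    rw [← hm, ← zpow_mul, ← zpow_mul, mul_neg]
    exact hxu (m * k)
  intro t ht
  rcases dihedral_gen hx2 hconj hgen t with h | h
  · exact h
  · exfalso
    apply hxT
    have h1 : x * t ∈ zpowers u := (zpowers_le.mpr hyT) h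
    have := mul_mem h1 (inv_mem ht)
    simpa [mul_assoc] using this

lemma cyclic_case {G : Type*} [Group G] [Finite G] {u x y : G} {p : ℕ}
    (hp : p.Prime) (hpn : p ∣ orderOf u)
    (hxT : x ∈ zpowers u) (hyT : y ∈ zpowers u)
    (hgen : Subgroup.closure {x, y} = ⊤) :
    u ^ (orderOf u / p) ∈ zpowers x ∨ u ^ (orderOf u / p) ∈ zpowers y := by
  have hsub : Subgroup.closure {x, y} ≤ zpowers u := by
    rw [Subgroup.closure_le]
    rintro s (rfl | rfl) <;> assumption
  set L := Nat.lcm (orderOf x) (orderOf y) with hL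
  have hLpow : ∀ g ∈ Subgroup.closure {x, y}, g ^ L = 1 := by
    intro g hg
    induction hg using Subgroup.closure_induction with
    | mem s hs =>
        rcases hs with rfl | rfl
        · exact orderOf_dvd_iff_pow_eq_one.mp (Nat.dvd_lcm_left _ _)
        · exact orderOf_dvd_iff_pow_eq_one.mp (Nat.dvd_lcm_right _ _)
    | one => exact one_pow L
    | mul g h hg hh ihg ihh =>
        obtain ⟨a, ha⟩ := mem_zpowers_iff.mp (hsub hg)
        obtain ⟨b, hb⟩ := mem_zpowers_iff.mp (hsub hh)
        have hcomm : Commute g h := by rw [← ha, ← hb]; exact (Commute.refl u).zpow_zpow a b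
        rw [hcomm.mul_pow, ihg, ihh, one_mul]
    | inv g hg ihg => rw [inv_pow, ihg, inv_one]
  have huL : u ^ L = 1 := hLpow u (by rw [hgen]; exact mem_top u)
  have hdvd : p ∣ orderOf x * orderOf y :=
    dvd_trans (dvd_trans hpn (orderOf_dvd_iff_pow_eq_one.mpr huL)) (Nat.lcm_dvd_mul _ _)
  have key : ∀ z : G, z ∈ zpowers u → p ∣ orderOf z → u ^ (orderOf u / p) ∈ zpowers z := by
    intro z hz hpz
    obtain ⟨a, haz0⟩ := mem_powers_iff_mem_zpowers.mpr hz
    have haz : u ^ a = z := haz0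
    set n := orderOf u with hn
    set d := Nat.gcd n a with hd
    have hdn : d ∣ n := Nat.gcd_dvd_left n a
    have hord : orderOf z = n / d := by rw [← haz, orderOf_pow]
    have hpz' : p ∣ n / d := hord ▸ hpz
    obtain ⟨m, hmm0⟩ := hpz'
    have hn_eq : n = d * (p * m) := by rw [← hmm0, Nat.mul_div_cancel' hdn]
    have hmm : n / p = d * m := by
      rw [hn_eq, show d * (p * m) = p * (d * m) by ring, Nat.mul_div_cancel_left _ hp.pos]
    have hud : u ^ (d : ℤ) ∈ zpowers z := by
      have hbez := Nat.gcd_eq_gcd_ab n a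
      rw [← hd] at hbez
      rw [hbez, zpow_add, zpow_mul, zpow_mul]
      have h1 : (u : G) ^ (n : ℤ) = 1 := by rw [zpow_natCast, hn, pow_orderOf_eq_one]
      have h2 : (u : G) ^ (a : ℤ) = z := by rw [zpow_natCast, haz]
      rw [h1, h2, one_zpow, one_mul]
      exact zpow_mem (mem_zpowers z) _
    have heq : u ^ (n / p) = (u ^ (d : ℤ)) ^ (m : ℤ) := by
      rw [← zpow_mul, ← Nat.cast_mul, ← hmm, zpow_natCast]
    rw [heq]
    exact zpow_mem hud _
  rcases (Nat.Prime.dvd_mul hp).mp hdvd with h | h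
  · exact Or.inl (key x hxT h)
  · exact Or.inr (key y hyT h)

theorem quot_not_beauville (N : Subgroup (DihedralGroup 0)) [N.Normal] :
    ¬ IsBeauvilleGroup (DihedralGroup 0 ⧸ N) := by
  rintro ⟨hFin, hNontriv, x1, y1, x2, y2, hg1, hg2, hint⟩
  set u : DihedralGroup 0 ⧸ N := ((r 1 : DihedralGroup 0) : DihedralGroup 0 ⧸ N) with hu
  have mk_r : ∀ i : ZMod 0,
      ((r i : DihedralGroup 0) : DihedralGroup 0 ⧸ N) = u ^ (show ℤ from i) := by
    intro i
    rw [hu, ← QuotientGroup.mk_zpow, r1_zpow]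
  have quot_cases : ∀ x : DihedralGroup 0 ⧸ N,
      x ∈ zpowers u ∨ (x * x = 1 ∧ ∀ k : ℤ, x * u ^ k * x = u ^ (-k)) := by
    intro x
    obtain ⟨d, rfl⟩ := QuotientGroup.mk_surjective x
    rcases dih_cases d with ⟨i, rfl⟩ | ⟨hd1, hd2⟩
    · exact Or.inl (mem_zpowers_iff.mpr ⟨i, by rw [hu, ← QuotientGroup.mk_zpow]⟩)
    · refine Or.inr ⟨?_, ?_⟩
      · rw [← QuotientGroup.mk_mul, hd1, QuotientGroup.mk_one]
      · intro k
        have h2 := congrArg (QuotientGroup.mk (s := N)) (hd2 k)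
        rw [QuotientGroup.mk_mul, QuotientGroup.mk_mul, QuotientGroup.mk_zpow,
          QuotientGroup.mk_zpow] at h2
        exact h2
  have key : ∃ h : DihedralGroup 0 ⧸ N, h ≠ 1 ∧
      ∀ x y : DihedralGroup 0 ⧸ N, Subgroup.closure {x, y} = ⊤ → h ∈ SigmaSet x y := by
    by_cases hu1 : u = 1
    · set s : DihedralGroup 0 ⧸ N := ((sr 0 : DihedralGroup 0) : DihedralGroup 0 ⧸ N) with hs
      have hall : ∀ g : DihedralGroup 0 ⧸ N, g = 1 ∨ g = s := by
        intro g
        obtain ⟨d, rfl⟩ := QuotientGroup.mk_surjective g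
        cases d with
        | r i => exact Or.inl (by rw [mk_r i, hu1, one_zpow])
        | sr i =>
            right
            have h1 : (sr i : DihedralGroup 0) = sr 0 * r i := by
              rw [sr_mul_r, zero_add]
            rw [h1, QuotientGroup.mk_mul, mk_r i, hu1, one_zpow, mul_one, hs]
      have hsne : s ≠ 1 := by
        intro hs1
        obtain ⟨a, b, hab⟩ := hNontriv
        rcases hall a with ha | ha <;> rcases hall b with hb | hb <;> exact hab (by simp only [ha, hb, hs1])
      refine ⟨s, hsne, fun x y hgen => ?_⟩
      rcases hall x with hx | hx
      · rcases hall y with hy | hy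
        · exfalso
          apply hsne
          have hsm : s ∈ Subgroup.closure {x, y} := by rw [hgen]; exact mem_top s
          rw [hx, hy, Set.pair_eq_singleton, Subgroup.closure_singleton_one] at hsm
          exact hsm
        · exact zpowers_subset_sigma_right x y (by rw [hy]; exact mem_zpowers s)
      · exact zpowers_subset_sigma_left x y (by rw [hx]; exact mem_zpowers s)
    · set n := orderOf u with hn
      have hn0 : 0 < n := orderOf_pos u
      have hn1 : n ≠ 1 := fun h1 => hu1 (orderOf_eq_one_iff.mp h1)
      set p := n.minFac with hp'
      have hp : p.Prime := Nat.minFac_prime hn1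
      have hpn : p ∣ n := Nat.minFac_dvd n
      have hdivlt : n / p < n := Nat.div_lt_self hn0 hp.one_lt
      have hdivpos : 0 < n / p := Nat.div_pos (Nat.le_of_dvd hn0 hpn) hp.pos
      refine ⟨u ^ (n / p), ?_, ?_⟩
      · intro h1
        have hd : n ∣ n / p := orderOf_dvd_of_pow_eq_one h1
        exact absurd (Nat.le_of_dvd hdivpos hd) (not_le.mpr hdivlt)
      · intro x y hgen
        have hinT : u ^ (n / p) ∈ zpowers u := pow_mem (mem_zpowers u) _
        by_cases hx : x ∈ zpowers u
        · by_cases hy : y ∈ zpowers u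
          · rcases cyclic_case hp hpn hx hy hgen with h | h
            · exact zpowers_subset_sigma_left x y h
            · exact zpowers_subset_sigma_right x y h
          · rcases quot_cases y with h | ⟨hy2, hyu⟩
            · exact absurd h hy
            · have hgen' : Subgroup.closure {y, x} = ⊤ := by
                rw [Set.pair_comm]; exact hgen
              exact zpowers_subset_sigma_left x y
                (T_le_zpowers hy2 hyu hy hx hgen' hinT)
        · rcases quot_cases x with h | ⟨hx2, hxu⟩
          · exact absurd h hx
          by_cases hy : y ∈ zpowers u
          · exact zpowers_subset_sigma_right x y
              (T_le_zpowers hx2 hxu hx hy hgen hinT)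
          · have hz : x * y ∈ zpowers u := by
              obtain ⟨d, hd⟩ := QuotientGroup.mk_surjective x
              obtain ⟨e, he⟩ := QuotientGroup.mk_surjective y
              cases d with
              | r i => exact absurd (by rw [← hd, mk_r i]; exact zpow_mem (mem_zpowers u) _) hx
              | sr i =>
                  cases e with
                  | r j => exact absurd (by rw [← he, mk_r j]; exact zpow_mem (mem_zpowers u) _) hy
                  | sr j =>
                      rw [← hd, ← he, ← QuotientGroup.mk_mul, sr_mul_sr, mk_r]
                      exact zpow_mem (mem_zpowers u) _
            have hgen2 : Subgroup.closure {x, x * y} = ⊤ := by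
              refine le_antisymm le_top ?_
              rw [← hgen]
              refine (Subgroup.closure_le _).mpr ?_
              rintro w (rfl | rfl)
              · exact Subgroup.subset_closure (Or.inl rfl)
              · have hmm : x * (x * w) ∈ Subgroup.closure {x, x * w} :=
                  mul_mem (Subgroup.subset_closure (Or.inl rfl))
                    (Subgroup.subset_closure (Or.inr rfl))
                rwa [← mul_assoc, hx2, one_mul] at hmm
            exact zpowers_subset_sigma_mul x y
              (T_le_zpowers hx2 hxu hx hz hgen2 hinT)
  obtain ⟨h, hne, hmem⟩ := key
  have hfin : h ∈ SigmaSet x1 y1 ∩ SigmaSet x2 y2 := ⟨hmem x1 y1 hg1, hmem x2 y2 hg2⟩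
  rw [hint] at hfin
  exact hne hfin
namespace DihIso

abbrev P := PresentedGroup (freeProdRels 2)

def a : P := PresentedGroup.of 0
def b : P := PresentedGroup.of 1

lemma rel_mem (x : FreeGroup (Fin 2)) (h : x ∈ freeProdRels 2) :
    (QuotientGroup.mk x : P) = 1 := by
  rw [QuotientGroup.eq_one_iff]
  exact Subgroup.subset_normalClosure h

lemma a_sq : a * a = 1 := by
  have h := rel_mem (FreeGroup.of 0 ^ 2) (Or.inl rfl)
  rw [pow_two] at h
  exact h

lemma b_sq : b * b = 1 := by
  have h := rel_mem (FreeGroup.of 1 ^ 2) (Or.inr rfl)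
  rw [pow_two] at h
  exact h

def t : P := a * b

lemma a_inv : a⁻¹ = a := inv_eq_of_mul_eq_one_left a_sq
lemma b_inv : b⁻¹ = b := inv_eq_of_mul_eq_one_left b_sq

lemma conj_t (k : ℤ) : a * t ^ k * a = t ^ (-k) := by
  have h1 : a * t * a⁻¹ = t⁻¹ := by
    rw [t, a_inv, mul_inv_rev, a_inv, b_inv]
    calc a * (a * b) * a = (a * a) * (b * a) := by group
    _ = b * a := by rw [a_sq, one_mul]
  calc a * t ^ k * a = a * t ^ k * a⁻¹ := by rw [a_inv]
  _ = (a * t * a⁻¹) ^ k := conj_zpow.symm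
  _ = (t⁻¹) ^ k := by rw [h1]
  _ = t ^ (-k) := by group

-- the map P → D∞
def fgen : Fin 2 → DihedralGroup 0 := ![sr 0, sr 1]

lemma frels : ∀ x ∈ freeProdRels 2, FreeGroup.lift fgen x = 1 := by
  rintro x (rfl | rfl) <;>
    simp [fgen, map_pow, pow_two, sr_mul_sr]

def phi : P →* DihedralGroup 0 := PresentedGroup.toGroup frels

lemma phi_a : phi a = sr 0 := PresentedGroup.toGroup.of frels
lemma phi_b : phi b = sr 1 := PresentedGroup.toGroup.of frels
lemma phi_t : phi t = r 1 := by
  rw [t, map_mul, phi_a, phi_b, sr_mul_sr]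
  norm_num

def toInt (i : ZMod 0) : ℤ := i

def psifun : DihedralGroup 0 → P
  | .r i => t ^ toInt i
  | .sr i => a * t ^ toInt i

lemma psifun_r (i : ZMod 0) : psifun (r i) = t ^ toInt i := rfl
lemma psifun_sr (i : ZMod 0) : psifun (sr i) = a * t ^ toInt i := rfl

lemma toInt_add (i j : ZMod 0) : toInt (i + j) = toInt i + toInt j := rfl
lemma toInt_sub (i j : ZMod 0) : toInt (i - j) = toInt i - toInt j := rfl

def psi : DihedralGroup 0 →* P where
  toFun := psifun
  map_one' := by rw [one_def, psifun_r]; exact zpow_zero t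
  map_mul' := by
    intro g h
    show psifun (g * h) = psifun g * psifun h
    cases g with
    | r i =>
        cases h with
        | r j => rw [r_mul_r, psifun_r, psifun_r, psifun_r, toInt_add, zpow_add]
        | sr j =>
            rw [r_mul_sr, psifun_sr, psifun_r, psifun_sr, toInt_sub]
            have h1 : t ^ toInt i * (a * t ^ toInt j) = (a * (a * t ^ toInt i * a)) * t ^ toInt j := by
              rw [← mul_assoc, ← mul_assoc, ← mul_assoc, a_sq, one_mul]
            rw [h1, conj_t, mul_assoc, ← zpow_add]
            congr 1
            ring
    | sr i =>
        cases h with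
        | r j => rw [sr_mul_r, psifun_sr, psifun_sr, psifun_r, toInt_add, zpow_add, mul_assoc]
        | sr j =>
            rw [sr_mul_sr, psifun_r, psifun_sr, psifun_sr, toInt_sub]
            calc t ^ (toInt j - toInt i)
                = t ^ (-toInt i) * t ^ toInt j := by rw [← zpow_add]; congr 1; ring
            _ = (a * t ^ toInt i * a) * t ^ toInt j := by rw [conj_t]
            _ = a * t ^ toInt i * (a * t ^ toInt j) := by group

lemma phi_t_zpow (k : ℤ) : phi (t ^ k) = r (k : ZMod 0) := by
  rw [map_zpow, phi_t]
  exact r1_zpow k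

lemma phi_psi (d : DihedralGroup 0) : phi (psi d) = d := by
  cases d with
  | r i =>
      show phi (psifun (r i)) = r i
      rw [psifun_r, phi_t_zpow]; rfl
  | sr i =>
      show phi (psifun (sr i)) = sr i
      rw [psifun_sr, map_mul, phi_a, phi_t_zpow]
      have h3 := sr_mul_r (0 : ZMod 0) i
      rw [zero_add] at h3
      exact h3

lemma psi_phi : (psi.comp phi) = MonoidHom.id P := by
  apply PresentedGroup.ext
  intro x
  fin_cases x
  · show psi (phi a) = a
    rw [phi_a]
    show a * t ^ toInt 0 = a
    rw [show toInt 0 = 0 from rfl, zpow_zero, mul_one]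
  · show psi (phi b) = b
    rw [phi_b]
    show a * t ^ toInt 1 = b
    rw [show toInt 1 = 1 from rfl, zpow_one, t, ← mul_assoc, a_sq, one_mul]

def e : P ≃* DihedralGroup 0 where
  toFun := phi
  invFun := psi
  left_inv := fun p => DFunLike.congr_fun psi_phi p
  right_inv := phi_psi
  map_mul' := phi.map_mul

end DihIso

theorem dih_statement :
    (∀ (N : Subgroup (DihedralGroup 0)) (_ : N.Normal),
        ¬ IsBeauvilleGroup (DihedralGroup 0 ⧸ N)) ∧
    (∀ n : ℕ, ¬ IsBeauvilleGroup (PresentedGroup (freeProdRels 2) ⧸ lam 2 n)) := by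
  have part1 : ∀ (N : Subgroup (DihedralGroup 0)) (_ : N.Normal),
      ¬ IsBeauvilleGroup (DihedralGroup 0 ⧸ N) := by
    intro N hN
    haveI := hN
    exact quot_not_beauville N
  refine ⟨part1, fun n hB => ?_⟩
  haveI hLn : (lam 2 n : Subgroup (PresentedGroup (freeProdRels 2))).Normal := lam_normal 2 n
  haveI hNn : ((lam 2 n : Subgroup (PresentedGroup (freeProdRels 2))).map
      (DihIso.e : PresentedGroup (freeProdRels 2) →* DihedralGroup 0)).Normal :=
    hLn.map _ DihIso.e.surjective
  have iso := QuotientGroup.congr (lam 2 n)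
    ((lam 2 n : Subgroup (PresentedGroup (freeProdRels 2))).map
      (DihIso.e : PresentedGroup (freeProdRels 2) →* DihedralGroup 0)) DihIso.e rfl
  exact part1 _ hNn (isBeauville_of_mulEquiv iso hB)

/-- No finite quotient of the infinite dihedral group is a Beauville group; in particular,

for `F = C₂ * C₂`, no quotient `F/λ_n(F)` is a Beauville group. -/
theorem statement_15 :
    (∀ (N : Subgroup (DihedralGroup 0)) (_ : N.Normal),
        ¬ IsBeauvilleGroup (DihedralGroup 0 ⧸ N)) ∧
    (∀ n : ℕ, ¬ IsBeauvilleGroup (PresentedGroup (freeProdRels 2) ⧸ lam 2 n)) := by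
  exact dih_statement
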